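/- Let h : {u ∈ ℂ : Re(u) > R'} → ℂ satisfy h(u) = u + 1 + η(u) with |η(u)| ≤ A/|u|² and suppose Re(h(u)) ≥ Re(u) + 1/2 for all u in the domain. Then the sequence γ_n(u) := h^n(u) - n converges uniformly on {Re(u) > R'}, and the limit γ satisfies |γ(u) - u| ≤ C/|u| for some constant C depending only on A and R'. -/

import Mathlib

open Finset Filter

/-- Telescoping bound for the shifted sum. -/
lemma stmt7_aux_claim (x d : ℝ) (hx : 0 < x) (hd : 0 < d) :
    ∀ n : ℕ, ∑ k ∈ Finset.range n, 1/(x + d*((k:ℝ)+1))^2 ≤ 1/d * (1/x - 1/(x + d*n)) := by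
  intro n
  induction n with
  | zero => simp
  | succ m ih =>
    rw [Finset.sum_range_succ]
    have h1 : 0 < x + d*(m:ℝ) := by positivity
    have h2 : 0 < x + d*((m:ℝ)+1) := by positivity
    have key : 1/(x + d*((m:ℝ)+1))^2 ≤ 1/d * (1/(x + d*(m:ℝ)) - 1/(x + d*((m:ℝ)+1))) := by
      have e : 1/d * (1/(x + d*(m:ℝ)) - 1/(x + d*((m:ℝ)+1)))
          = 1/((x+d*(m:ℝ))*(x+d*((m:ℝ)+1))) := by
        field_simp
        ring
      rw [e]
      apply one_div_le_one_div_of_le (by positivity)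
      nlinarith
    have hc : ((m+1 : ℕ) : ℝ) = (m:ℝ) + 1 := by push_cast; ring
    rw [hc]
    linarith
/-- Partial sums of `1/(x+d k)²` are bounded by `1/x² + 1/(d x)`. -/
lemma stmt7_aux_partial (x d : ℝ) (hx : 0 < x) (hd : 0 < d) (n : ℕ) :
    ∑ k ∈ Finset.range n, 1/(x + d*(k:ℝ))^2 ≤ 1/x^2 + 1/(d*x) := by
  cases n with
  | zero => simp; positivity
  | succ m =>
    rw [Finset.sum_range_succ']
    have h1 := stmt7_aux_claim x d hx hd m
    have h2 : ∑ k ∈ Finset.range m, 1/(x + d*((k+1:ℕ):ℝ))^2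
        = ∑ k ∈ Finset.range m, 1/(x + d*((k:ℝ)+1))^2 := by
      apply Finset.sum_congr rfl
      intro k _
      push_cast
      ring_nf
    have h3 : (0:ℝ) ≤ 1/(x + d*(m:ℝ)) := by positivity
    have h4 : 1/(x + d*((0:ℕ):ℝ))^2 = 1/x^2 := by norm_num
    rw [h2, h4]
    have h5 : 1/d * (1/x - 1/(x + d*(m:ℝ))) ≤ 1/(d*x) := by
      have : 1/d * (1/x) = 1/(d*x) := by field_simp
      nlinarith [mul_nonneg (le_of_lt (by positivity : (0:ℝ) < 1/d)) h3]
    linarith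

lemma stmt7_aux_summable (x d : ℝ) (hx : 0 < x) (hd : 0 < d) :
    Summable (fun k : ℕ => 1/(x + d*(k:ℝ))^2) :=
  summable_of_sum_range_le (fun k => by positivity) (stmt7_aux_partial x d hx hd)

lemma stmt7_aux_tsum (x d : ℝ) (hx : 0 < x) (hd : 0 < d) :
    ∑' k : ℕ, 1/(x + d*(k:ℝ))^2 ≤ 1/x^2 + 1/(d*x) :=
  Summable.tsum_le_of_sum_range_le (stmt7_aux_summable x d hx hd) (stmt7_aux_partial x d hx hd)

set_option maxHeartbeats 1000000 in
/-- for a near-translation `h u = u + 1 + η u` with `|η u| ≤ A/|u|²`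
and `Re (h u) ≥ Re u + 1/2` on `{Re u > R'}`, the Fatou coordinate approximants
`γ_n (u) = h^[n] u - n` converge uniformly on the half-plane, and the limit `γ`
satisfies `|γ u - u| ≤ C/|u|` for some constant `C`. -/
theorem stmt7 (A R' : ℝ) (hA : 0 < A) (hR' : 0 < R')
    (h η : ℂ → ℂ)
    (hform : ∀ u : ℂ, R' < u.re → h u = u + 1 + η u)
    (hη : ∀ u : ℂ, R' < u.re → ‖η u‖ ≤ A / ‖u‖ ^ 2)
    (hre : ∀ u : ℂ, R' < u.re → u.re + 1/2 ≤ (h u).re) :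
    ∃ (γ : ℂ → ℂ) (C : ℝ), 0 < C ∧
      TendstoUniformlyOn (fun (n : ℕ) (u : ℂ) => h^[n] u - (n : ℂ)) γ
        Filter.atTop {u : ℂ | R' < u.re} ∧
      ∀ u : ℂ, R' < u.re → ‖γ u - u‖ ≤ C / ‖u‖ := by
  -- iterates stay in the half-plane, with real part growing linearly
  have key : ∀ u : ℂ, R' < u.re → ∀ k : ℕ,
      R' < (h^[k] u).re ∧ u.re + (k:ℝ)/2 ≤ (h^[k] u).re := by
    intro u hu k
    induction k with
    | zero => simpa using hu
    | succ m ih =>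
      obtain ⟨h1, h2⟩ := ih
      rw [Function.iterate_succ_apply']
      have h3 := hre _ h1
      constructor
      · linarith
      · push_cast; linarith
  set f : ℕ → ℂ → ℂ := fun k u => η (h^[k] u) with hfdef
  have habs : ∀ u : ℂ, R' < u.re → ∀ k : ℕ,
      u.re + (k:ℝ)/2 ≤ ‖h^[k] u‖ := by
    intro u hu k
    exact le_trans (key u hu k).2 (Complex.re_le_norm _)
  have hfb : ∀ u : ℂ, R' < u.re → ∀ k : ℕ,
      ‖f k u‖ ≤ A * (1/(u.re + (1/2)*(k:ℝ))^2) := by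
    intro u hu k
    have h1 := (key u hu k).1
    have h2 := habs u hu k
    have hpos : 0 < u.re + (k:ℝ)/2 := by
      have : (0:ℝ) ≤ (k:ℝ) := Nat.cast_nonneg k
      linarith
    calc ‖f k u‖ ≤ A / ‖h^[k] u‖ ^ 2 := hη _ h1
      _ ≤ A / (u.re + (1/2)*(k:ℝ))^2 := by
          have hpos2 : 0 < u.re + (1/2)*(k:ℝ) := by linarith
          have hle : u.re + (1/2)*(k:ℝ) ≤ ‖h^[k] u‖ := by linarith
          gcongr
      _ = A * (1/(u.re + (1/2)*(k:ℝ))^2) := by ring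
  set M : ℕ → ℝ := fun k => A * (1/(R' + (1/2)*(k:ℝ))^2) with hMdef
  have hMsummable : Summable M :=
    (stmt7_aux_summable R' (1/2) hR' one_half_pos).mul_left A
  have hMnonneg : ∀ k, 0 ≤ M k := fun k => by positivity
  have hfM : ∀ u : ℂ, R' < u.re → ∀ k : ℕ, ‖f k u‖ ≤ M k := by
    intro u hu k
    refine le_trans (hfb u hu k) ?_
    have hk : (0:ℝ) ≤ (k:ℝ) := Nat.cast_nonneg k
    have h1 : 0 < R' + (1/2)*(k:ℝ) := by linarith
    have h2 : R' + (1/2)*(k:ℝ) ≤ u.re + (1/2)*(k:ℝ) := by linarith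
    simp only [hMdef]
    gcongr
  -- formula for the iterates
  have hiter : ∀ u : ℂ, R' < u.re → ∀ n : ℕ,
      h^[n] u = u + (n:ℂ) + ∑ k ∈ Finset.range n, f k u := by
    intro u hu n
    induction n with
    | zero => simp
    | succ m ih =>
      have hstep : h^[m+1] u = h^[m] u + 1 + f m u := by
        rw [Function.iterate_succ_apply']
        exact hform _ (key u hu m).1
      rw [hstep, ih, Finset.sum_range_succ]
      push_cast
      ring
  set B : ℝ := ∑' k, M k with hBdef
  have hB0 : 0 < B := by
    refine Summable.tsum_pos hMsummable hMnonneg 0 ?_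
    positivity
  -- summability of the series of norms, pointwise
  have hsummf : ∀ u : ℂ, R' < u.re → Summable (fun k => ‖f k u‖) := by
    intro u hu
    exact Summable.of_nonneg_of_le (fun k => (norm_nonneg _)) (hfM u hu) hMsummable
  have hsummfC : ∀ u : ℂ, R' < u.re → Summable (fun k => f k u) := by
    intro u hu
    refine Summable.of_norm ?_
    simpa using hsummf u hu
  set γ : ℂ → ℂ := fun u => u + ∑' k, f k u with hγdef
  -- uniform convergence
  have base : TendstoUniformlyOn (fun n u => ∑ k ∈ Finset.range n, f k u)
      (fun u => ∑' k, f k u) atTop {u : ℂ | R' < u.re} := by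
    apply tendstoUniformlyOn_tsum_nat hMsummable
    intro k u hu
    simpa using hfM u hu k
  have huniform : TendstoUniformlyOn (fun (n : ℕ) (u : ℂ) => h^[n] u - (n : ℂ)) γ
      atTop {u : ℂ | R' < u.re} := by
    rw [Metric.tendstoUniformlyOn_iff] at base ⊢
    intro ε hε
    filter_upwards [base ε hε] with n hn u hu
    have hu' : R' < u.re := hu
    have e : h^[n] u - (n:ℂ) = u + ∑ k ∈ Finset.range n, f k u := by
      rw [hiter u hu' n]; ring
    rw [e]
    have := hn u hu
    simpa [hγdef, dist_add_left] using this
  -- bound on the displacement of iterates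
  have hdist : ∀ u : ℂ, R' < u.re → ∀ k : ℕ,
      ‖h^[k] u - (u + (k:ℂ))‖ ≤ B := by
    intro u hu k
    have e : h^[k] u - (u + (k:ℂ)) = ∑ j ∈ Finset.range k, f j u := by
      rw [hiter u hu k]; ring
    rw [e]
    calc ‖∑ j ∈ Finset.range k, f j u‖
        ≤ ∑ j ∈ Finset.range k, ‖f j u‖ := by
          simpa using
            norm_sum_le (Finset.range k) (fun j => f j u)
      _ ≤ ∑ j ∈ Finset.range k, M j :=
          Finset.sum_le_sum (fun j _ => hfM u hu j)
      _ ≤ B := Summable.sum_le_tsum (Finset.range k) (fun j _ => hMnonneg j) hMsummable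
  set C : ℝ := 3*B^2 + 9*A*(1/R' + 1) with hCdef
  have hC0 : 0 < C := by positivity
  refine ⟨γ, C, hC0, huniform, ?_⟩
  intro u hu
  set t : ℝ := ‖u‖ with htdef
  have hxt : u.re ≤ t := Complex.re_le_norm u
  have ht0 : 0 < t := by linarith
  have hRt : R' < t := by linarith
  have hγu : ‖γ u - u‖ ≤ ∑' k, ‖f k u‖ := by
    have hsn : Summable (fun k => ‖f k u‖) := by
      simpa using hsummf u hu
    have e : γ u - u = ∑' k, f k u := by
      simp only [hγdef]
      ring
    calc ‖γ u - u‖ = ‖∑' k, f k u‖ := by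
          rw [e]
      _ ≤ ∑' k, ‖f k u‖ := norm_tsum_le_tsum_norm hsn
      _ = ∑' k, ‖f k u‖ := by
          simp
  rcases le_or_gt t (3*B) with hcase | hcase
  · -- small |u|: use the uniform constant bound
    have h1 : ∑' k, ‖f k u‖ ≤ B :=
      Summable.tsum_le_tsum (hfM u hu) (hsummf u hu) hMsummable
    have h2 : B ≤ C / t := by
      rw [le_div_iff₀ ht0]
      have h3 : B * t ≤ 3*B^2 := by nlinarith
      have h4 : 0 < 9*A*(1/R' + 1) := by positivity
      have h5 : 3*B^2 ≤ C := by rw [hCdef]; linarith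
      linarith
    linarith [hγu]
  · -- large |u|: each iterate has modulus at least (t+k)/3
    have hk9 : ∀ k : ℕ, ‖f k u‖ ≤ (9*A) * (1/(t + 1*(k:ℝ))^2) := by
      intro k
      have hk0 : (0:ℝ) ≤ (k:ℝ) := Nat.cast_nonneg k
      have hBs : B ≤ (t + (k:ℝ))/3 := by linarith
      -- |u + k| ≥ (t+k)/3 + B
      have habs2 : (t + (k:ℝ))/3 + B ≤ ‖u + (k:ℂ)‖ := by
        have hsqabs : (‖u + (k:ℂ)‖)^2 = (u.re + (k:ℝ))^2 + u.im^2 := by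
          rw [← Complex.normSq_eq_norm_sq, Complex.normSq_apply]
          simp
          ring
        have ht2 : t^2 = u.re^2 + u.im^2 := by
          rw [htdef, ← Complex.normSq_eq_norm_sq, Complex.normSq_apply]
          ring
        have hx0 : 0 < u.re := by linarith
        have hsq : ((t + (k:ℝ))/3 + B)^2 ≤ (‖u + (k:ℂ)‖)^2 := by
          rw [hsqabs]
          nlinarith [sq_nonneg (t - (k:ℝ)), mul_nonneg hx0.le hk0,
            mul_le_mul_of_nonneg_right hBs (by positivity : (0:ℝ) ≤ t + (k:ℝ)),
            mul_le_mul_of_nonneg_left hBs hB0.le]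
        nlinarith [norm_nonneg (u + (k:ℂ)), hsq, hB0, ht0]
      have hlow : (t + (k:ℝ))/3 ≤ ‖h^[k] u‖ := by
        have h3 := hdist u hu k
        have h4 : ‖u + (k:ℂ)‖ - ‖h^[k] u‖
            ≤ ‖h^[k] u - (u + (k:ℂ))‖ := by
          have := norm_sub_norm_le (u + (k:ℂ)) (h^[k] u)
          rw [← norm_sub_rev] at this
          simpa using this
        linarith
      have h1 := (key u hu k).1
      have hpos : 0 < (t + (k:ℝ))/3 := by positivity
      calc ‖f k u‖ ≤ A / ‖h^[k] u‖ ^ 2 := hη _ h1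
        _ ≤ A / ((t + (k:ℝ))/3)^2 := by gcongr
        _ = (9*A) * (1/(t + 1*(k:ℝ))^2) := by
            rw [one_mul, div_pow, div_div_eq_mul_div, mul_one_div]
            ring
    have hsum9 : Summable (fun k : ℕ => (9*A) * (1/(t + 1*(k:ℝ))^2)) :=
      (stmt7_aux_summable t 1 ht0 one_pos).mul_left (9*A)
    have h1 : ∑' k, ‖f k u‖ ≤ ∑' k : ℕ, (9*A) * (1/(t + 1*(k:ℝ))^2) :=
      Summable.tsum_le_tsum hk9 (hsummf u hu) hsum9
    have h2 : ∑' k : ℕ, (9*A) * (1/(t + 1*(k:ℝ))^2) ≤ (9*A) * (1/t^2 + 1/(1*t)) := by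
      rw [tsum_mul_left]
      gcongr
      exact stmt7_aux_tsum t 1 ht0 one_pos
    have h3 : (9*A) * (1/t^2 + 1/(1*t)) ≤ C / t := by
      rw [le_div_iff₀ ht0]
      have e1 : (9*A) * (1/t^2 + 1/(1*t)) * t = 9*A*(1/t + 1) := by
        field_simp
      rw [e1]
      have h1t : 1/t ≤ 1/R' := by
        apply one_div_le_one_div_of_le hR' hRt.le
      nlinarith
    linarith [hγu]
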